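/- Suppose the constants satisfy the hierarchy 1/n ≪ ε₃ ≪ 1. Let G be a digraph on n vertices with δ⁰(G) ≥ n/2 and suppose A, B, S, T is a partition of V(G) satisfying (Q0)–(Q8), with |A| = a, |B| = b and b = a + d for some d > 0. Then there is a matching of size d+2 in E(B∪T, B). -/

import Mathlib

open Finset

open scoped Classical

noncomputable section

variable {n : ℕ}

/-- Number of outneighbours of `x` lying in `X`, in the digraph with edge set `G`. -/
def dPlus (G : Finset (Fin n × Fin n)) (X : Finset (Fin n)) (x : Fin n) : ℕ :=
  (G.filter fun e => e.1 = x ∧ e.2 ∈ X).card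

/-- Number of inneighbours of `x` lying in `X`. -/
def dMinus (G : Finset (Fin n × Fin n)) (X : Finset (Fin n)) (x : Fin n) : ℕ :=
  (G.filter fun e => e.2 = x ∧ e.1 ∈ X).card

/-- The minimum semidegree of `G` is at least `r`. -/
def MinSemi (G : Finset (Fin n × Fin n)) (r : ℝ) : Prop :=
  ∀ x : Fin n, r ≤ (dPlus G Finset.univ x : ℝ) ∧ r ≤ (dMinus G Finset.univ x : ℝ)

/-- `A, B, S, T` is a partition of the vertex set. -/
def Partition4 (A B S T : Finset (Fin n)) : Prop :=
  A ∪ B ∪ S ∪ T = Finset.univ ∧ Disjoint A B ∧ Disjoint A S ∧ Disjoint A T ∧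
    Disjoint B S ∧ Disjoint B T ∧ Disjoint S T

/-- Property (Q0): `a ≤ b` and `s ≤ t`. -/
def Q0 (A B S T : Finset (Fin n)) : Prop := A.card ≤ B.card ∧ S.card ≤ T.card

/-- Properties (Q1)–(Q8) of an `AB`-extremal partition. -/
def Qconds (G : Finset (Fin n × Fin n)) (A B S T : Finset (Fin n)) (ε₃ : ℝ) : Prop :=
  -- (Q1)
  (((n / 2 : ℕ) : ℝ) - ε₃ * n ≤ (A.card : ℝ) ∧
    (A.card : ℝ) ≤ (((n + 1) / 2 : ℕ) : ℝ) + ε₃ * n ∧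
    ((n / 2 : ℕ) : ℝ) - ε₃ * n ≤ (B.card : ℝ) ∧
    (B.card : ℝ) ≤ (((n + 1) / 2 : ℕ) : ℝ) + ε₃ * n) ∧
  -- (Q2)
  ((∀ x ∈ A, (n : ℝ) / 50 ≤ (dPlus G B x : ℝ) ∧ (n : ℝ) / 50 ≤ (dMinus G B x : ℝ)) ∧
    (∀ x ∈ B, (n : ℝ) / 50 ≤ (dPlus G A x : ℝ) ∧ (n : ℝ) / 50 ≤ (dMinus G A x : ℝ))) ∧
  -- (Q3)
  (((A.filter fun x => ¬((n : ℝ) / 2 - ε₃ * n ≤ (dPlus G B x : ℝ) ∧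
      (n : ℝ) / 2 - ε₃ * n ≤ (dMinus G B x : ℝ))).card : ℝ) ≤ ε₃ * n) ∧
  -- (Q4)
  (((B.filter fun x => ¬((n : ℝ) / 2 - ε₃ * n ≤ (dPlus G A x : ℝ) ∧
      (n : ℝ) / 2 - ε₃ * n ≤ (dMinus G A x : ℝ))).card : ℝ) ≤ ε₃ * n) ∧
  -- (Q5)
  ((S.card : ℝ) + (T.card : ℝ) ≤ ε₃ * n) ∧
  -- (Q6)
  (∀ x ∈ S, (n : ℝ) / 50 ≤ (dMinus G A x : ℝ) ∧ (n : ℝ) / 50 ≤ (dPlus G B x : ℝ)) ∧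
  -- (Q7)
  (∀ x ∈ T, (n : ℝ) / 50 ≤ (dMinus G B x : ℝ) ∧ (n : ℝ) / 50 ≤ (dPlus G A x : ℝ)) ∧
  -- (Q8)
  (A.card < B.card →
    (∀ x ∈ B, (dPlus G B x : ℝ) < (n : ℝ) / 20 ∧ (dMinus G B x : ℝ) < (n : ℝ) / 20) ∧
    (∀ x ∈ S, (dMinus G B x : ℝ) < (n : ℝ) / 20) ∧
    (∀ x ∈ T, (dPlus G B x : ℝ) < (n : ℝ) / 20))

lemma dMinus_mono (G : Finset (Fin n × Fin n)) {X Y : Finset (Fin n)} (h : X ⊆ Y)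
    (v : Fin n) : dMinus G X v ≤ dMinus G Y v := by
  apply Finset.card_le_card
  intro e he
  simp only [Finset.mem_filter] at he ⊢
  exact ⟨he.1, he.2.1, h he.2.2⟩

lemma dPlus_mono (G : Finset (Fin n × Fin n)) {X Y : Finset (Fin n)} (h : X ⊆ Y)
    (v : Fin n) : dPlus G X v ≤ dPlus G Y v := by
  apply Finset.card_le_card
  intro e he
  simp only [Finset.mem_filter] at he ⊢
  exact ⟨he.1, he.2.1, h he.2.2⟩

lemma dMinus_union_le (G : Finset (Fin n × Fin n)) (X Y : Finset (Fin n)) (v : Fin n) :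
    dMinus G (X ∪ Y) v ≤ dMinus G X v + dMinus G Y v := by
  refine le_trans (Finset.card_le_card ?_) (Finset.card_union_le _ _)
  intro e he
  simp only [Finset.mem_filter, Finset.mem_union] at he ⊢
  rcases he.2.2 with h | h
  · exact Or.inl ⟨he.1, he.2.1, h⟩
  · exact Or.inr ⟨he.1, he.2.1, h⟩

lemma dMinus_le_card (G : Finset (Fin n × Fin n)) (X : Finset (Fin n)) (v : Fin n) :
    dMinus G X v ≤ X.card := by
  apply Finset.card_le_card_of_injOn (fun e => e.1)
  · intro e he
    simp only [Finset.mem_coe, Finset.mem_filter] at he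
    exact he.2.2
  · intro e he f hf hef
    simp only [Finset.mem_coe, Finset.mem_filter] at he hf
    exact Prod.ext hef (he.2.1.trans hf.2.1.symm)

lemma sum_dMinus (G : Finset (Fin n × Fin n)) (X Y : Finset (Fin n)) :
    ∑ y ∈ Y, dMinus G X y = (G.filter fun e => e.1 ∈ X ∧ e.2 ∈ Y).card := by
  rw [Finset.card_eq_sum_card_fiberwise
    (f := fun e => e.2) (t := Y) (fun e he => (Finset.mem_filter.mp he).2.2)]
  refine Finset.sum_congr rfl fun y hy => ?_
  rw [Finset.filter_filter]
  unfold dMinus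
  refine congrArg Finset.card (Finset.filter_congr fun e _ => ?_)
  have hy' : ∀ (_ : e.2 = y), e.2 ∈ Y := fun hz => hz ▸ hy
  tauto

lemma sum_dPlus (G : Finset (Fin n × Fin n)) (X Y : Finset (Fin n)) :
    ∑ x ∈ X, dPlus G Y x = (G.filter fun e => e.1 ∈ X ∧ e.2 ∈ Y).card := by
  rw [Finset.card_eq_sum_card_fiberwise
    (f := fun e => e.1) (t := X) (fun e he => (Finset.mem_filter.mp he).2.1)]
  refine Finset.sum_congr rfl fun x hx => ?_
  rw [Finset.filter_filter]
  unfold dPlus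
  refine congrArg Finset.card (Finset.filter_congr fun e _ => ?_)
  have hx' : ∀ (_ : e.1 = x), e.1 ∈ X := fun hz => hz ▸ hx
  tauto

set_option maxHeartbeats 1600000 in
/-- if `1/n ≪ ε₃ ≪ 1`, `δ⁰(G) ≥ n/2`, `A,B,S,T` is a partition satisfying
(Q0)–(Q8) and `b = a + d` with `d > 0`, then there is a matching of size `d+2` in
`E(B∪T, B)`. -/
theorem stmt_12 :
    ∃ ε₃max : ℝ, 0 < ε₃max ∧ ∀ ε₃ : ℝ, 0 < ε₃ → ε₃ ≤ ε₃max →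
    ∃ n₀ : ℕ, ∀ n : ℕ, n₀ ≤ n →
    ∀ G : Finset (Fin n × Fin n), (∀ e ∈ G, e.1 ≠ e.2) →
      MinSemi G ((n : ℝ) / 2) →
      ∀ A B S T : Finset (Fin n), Partition4 A B S T → Q0 A B S T → Qconds G A B S T ε₃ →
      ∀ d : ℕ, 0 < d → B.card = A.card + d →
      ∃ M : Finset (Fin n × Fin n), M ⊆ G ∧ M.card = d + 2 ∧
        (∀ e ∈ M, e.1 ∈ B ∪ T ∧ e.2 ∈ B) ∧
        (∀ e ∈ M, ∀ f ∈ M, e ≠ f →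
          e.1 ≠ f.1 ∧ e.1 ≠ f.2 ∧ e.2 ≠ f.1 ∧ e.2 ≠ f.2) := by
  refine ⟨1/200, by norm_num, ?_⟩
  intro ε₃ hε₃pos hε₃le
  refine ⟨200, ?_⟩
  intro n hn G hloop hsemi A B S T hpart hq0 hq d hd hbd
  obtain ⟨hPU, hAB, hAS, hAT, hBS, hBT, hST⟩ := hpart
  obtain ⟨hq1, hq2, hq3, hq4, hq5, hq6, hq7, hq8⟩ := hq
  have hab : A.card < B.card := by omega
  obtain ⟨hq8B, hq8S, hq8T⟩ := hq8 hab
  -- basic cardinality facts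
  have hcardsum : A.card + B.card + S.card + T.card = n := by
    have hd1 : Disjoint (A ∪ B) S := Finset.disjoint_union_left.mpr ⟨hAS, hBS⟩
    have hd2 : Disjoint (A ∪ B ∪ S) T :=
      Finset.disjoint_union_left.mpr ⟨Finset.disjoint_union_left.mpr ⟨hAT, hBT⟩, hST⟩
    have h1 : (A ∪ B ∪ S ∪ T).card = n := by
      rw [hPU, Finset.card_univ, Fintype.card_fin]
    rwa [Finset.card_union_of_disjoint hd2, Finset.card_union_of_disjoint hd1,
      Finset.card_union_of_disjoint hAB] at h1
  -- real arithmetic facts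
  have hnR : (200 : ℝ) ≤ (n : ℝ) := by exact_mod_cast hn
  have hεn : ε₃ * (n : ℝ) ≤ (n : ℝ) / 200 := by nlinarith
  have hfl : (n : ℝ) ≤ 2 * (((n / 2 : ℕ) : ℝ)) + 1 := by
    have : n ≤ 2 * (n / 2) + 1 := by omega
    exact_mod_cast this
  have hfl2 : 2 * (((n / 2 : ℕ) : ℝ)) ≤ (n : ℝ) := by
    have : 2 * (n / 2) ≤ n := by omega
    exact_mod_cast this
  have hceil : (((n + 1) / 2 : ℕ) : ℝ) ≤ (((n / 2 : ℕ)) : ℝ) + 1 := by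
    have : (n + 1) / 2 ≤ n / 2 + 1 := by omega
    exact_mod_cast this
  have hsumR : (A.card : ℝ) + (B.card : ℝ) + (S.card : ℝ) + (T.card : ℝ) = (n : ℝ) := by
    exact_mod_cast hcardsum
  have hbdR : (B.card : ℝ) = (A.card : ℝ) + (d : ℝ) := by exact_mod_cast hbd
  have hstR : (S.card : ℝ) ≤ (T.card : ℝ) := by exact_mod_cast hq0.2
  have hdR : (1 : ℝ) ≤ (d : ℝ) := by exact_mod_cast hd
  have hdub : (d : ℝ) ≤ 1 + 2 * (ε₃ * n) := by
    have h1 := hq1.1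
    have h2 := hq1.2.2.2
    linarith
  have key : ∀ k : ℕ, k ≤ d + 2 → ∃ M : Finset (Fin n × Fin n), M ⊆ G ∧ M.card = k ∧
      (∀ e ∈ M, e.1 ∈ B ∪ T ∧ e.2 ∈ B) ∧
      (∀ e ∈ M, ∀ f ∈ M, e ≠ f →
        e.1 ≠ f.1 ∧ e.1 ≠ f.2 ∧ e.2 ≠ f.1 ∧ e.2 ≠ f.2) := by
    intro k
    induction k with
    | zero => exact fun _ => ⟨∅, by simp, by simp, by simp, by simp⟩
    | succ k ih =>
      intro hk
      obtain ⟨M, hMG, hMcard, hMin, hMdisj⟩ := ih (by omega)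
      set Vm := M.image Prod.fst ∪ M.image Prod.snd with hVmdef
      have hVmem : ∀ f ∈ M, f.1 ∈ Vm ∧ f.2 ∈ Vm := fun f hf =>
        ⟨Finset.mem_union_left _ (Finset.mem_image_of_mem _ hf),
         Finset.mem_union_right _ (Finset.mem_image_of_mem _ hf)⟩
      have hVmcard : Vm.card ≤ 2 * k := by
        calc Vm.card ≤ (M.image Prod.fst).card + (M.image Prod.snd).card :=
              Finset.card_union_le _ _
          _ ≤ M.card + M.card := add_le_add Finset.card_image_le Finset.card_image_le
          _ = 2 * k := by omega
      set X' := (B ∪ T) \ Vm with hX'def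
      set Xc := (B ∪ T) ∩ Vm with hXcdef
      set Y' := B \ Vm with hY'def
      -- per-vertex degree bound
      have hcover : (Finset.univ : Finset (Fin n)) ⊆ ((A ∪ S) ∪ Xc) ∪ X' := by
        intro x _
        have hx : x ∈ A ∪ B ∪ S ∪ T := by rw [hPU]; exact Finset.mem_univ x
        simp only [Finset.mem_union, Finset.mem_inter, Finset.mem_sdiff,
          hX'def, hXcdef] at hx ⊢
        by_cases hxv : x ∈ Vm <;> tauto
      have hper : ∀ y ∈ Y', ((n : ℝ) / 2) ≤ (A.card : ℝ) + (S.card : ℝ) +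
          (dMinus G Xc y : ℝ) + (dMinus G X' y : ℝ) := by
        intro y _
        have h1 := (hsemi y).2
        have h2 : dMinus G Finset.univ y ≤
            dMinus G A y + dMinus G S y + dMinus G Xc y + dMinus G X' y := by
          calc dMinus G Finset.univ y ≤ dMinus G (((A ∪ S) ∪ Xc) ∪ X') y :=
                dMinus_mono G hcover y
            _ ≤ dMinus G ((A ∪ S) ∪ Xc) y + dMinus G X' y := dMinus_union_le G _ _ y
            _ ≤ (dMinus G (A ∪ S) y + dMinus G Xc y) + dMinus G X' y :=
                Nat.add_le_add_right (dMinus_union_le G _ _ y) _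
            _ ≤ ((dMinus G A y + dMinus G S y) + dMinus G Xc y) + dMinus G X' y :=
                Nat.add_le_add_right (Nat.add_le_add_right (dMinus_union_le G _ _ y) _) _
        have h3 := dMinus_le_card G A y
        have h4 := dMinus_le_card G S y
        have h2R : (dMinus G Finset.univ y : ℝ) ≤ (dMinus G A y : ℝ) + (dMinus G S y : ℝ)
            + (dMinus G Xc y : ℝ) + (dMinus G X' y : ℝ) := by exact_mod_cast h2
        have h3R : (dMinus G A y : ℝ) ≤ (A.card : ℝ) := by exact_mod_cast h3
        have h4R : (dMinus G S y : ℝ) ≤ (S.card : ℝ) := by exact_mod_cast h4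
        linarith
      -- sum the per-vertex bound over Y'
      have hsum1 : (Y'.card : ℝ) * ((n : ℝ) / 2) ≤
          ((A.card : ℝ) + (S.card : ℝ)) * (Y'.card : ℝ) +
          (∑ y ∈ Y', (dMinus G Xc y : ℝ)) + (∑ y ∈ Y', (dMinus G X' y : ℝ)) := by
        have h := Finset.sum_le_sum hper
        rw [Finset.sum_const, nsmul_eq_mul] at h
        simp only [Finset.sum_add_distrib, Finset.sum_const, nsmul_eq_mul] at h
        linarith
      -- bound the Xc part
      have hXcB : ∑ y ∈ Y', (dMinus G Xc y : ℝ) ≤ (Xc.card : ℝ) * ((n : ℝ) / 20) := by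
        have hswap : ∑ y ∈ Y', dMinus G Xc y = ∑ u ∈ Xc, dPlus G Y' u := by
          rw [sum_dMinus, sum_dPlus]
        have hcast : ∑ y ∈ Y', (dMinus G Xc y : ℝ) = ∑ u ∈ Xc, (dPlus G Y' u : ℝ) := by
          rw [← Nat.cast_sum, ← Nat.cast_sum, hswap]
        rw [hcast]
        calc ∑ u ∈ Xc, (dPlus G Y' u : ℝ) ≤ ∑ _u ∈ Xc, ((n : ℝ) / 20) := by
              refine Finset.sum_le_sum fun u hu => ?_
              have huBT : u ∈ B ∪ T := (Finset.mem_inter.mp hu).1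
              have hmono : (dPlus G Y' u : ℝ) ≤ (dPlus G B u : ℝ) := by
                exact_mod_cast dPlus_mono G (Finset.sdiff_subset) u
              rcases Finset.mem_union.mp huBT with hu' | hu'
              · exact hmono.trans (le_of_lt (hq8B u hu').1)
              · exact hmono.trans (le_of_lt (hq8T u hu'))
          _ = (Xc.card : ℝ) * ((n : ℝ) / 20) := by
              rw [Finset.sum_const, nsmul_eq_mul]
      -- the X' part counts candidate edges
      set N := (G.filter fun e => e.1 ∈ X' ∧ e.2 ∈ Y').card with hNdef
      have hX'N : ∑ y ∈ Y', (dMinus G X' y : ℝ) = (N : ℝ) := by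
        rw [← Nat.cast_sum, sum_dMinus]
      -- cardinality estimates
      have hYcard : (B.card : ℝ) ≤ (Y'.card : ℝ) + (Vm.card : ℝ) := by
        exact_mod_cast Finset.card_le_card_sdiff_add_card
      have hVmR : (Vm.card : ℝ) ≤ 2 * (k : ℝ) := by exact_mod_cast hVmcard
      have hkR : (k : ℝ) ≤ (d : ℝ) + 1 := by
        have : k ≤ d + 1 := by omega
        exact_mod_cast this
      have hXcR : (Xc.card : ℝ) ≤ 2 * (d : ℝ) + 2 := by
        have h1 : Xc.card ≤ Vm.card := Finset.card_le_card Finset.inter_subset_right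
        have h1R : (Xc.card : ℝ) ≤ (Vm.card : ℝ) := by exact_mod_cast h1
        linarith
      -- the key counting inequality gives N > 0
      have hq1a := hq1.1
      have hq1b := hq1.2.2.1
      have hgap : (d : ℝ) / 2 ≤ (n : ℝ) / 2 - (A.card : ℝ) - (S.card : ℝ) := by
        linarith
      have hYbig : (0.45 : ℝ) * (n : ℝ) ≤ (Y'.card : ℝ) := by
        linarith
      have hprod0 : (0.45 : ℝ) * (n : ℝ) * ((d : ℝ) / 2) ≤
          (Y'.card : ℝ) * ((n : ℝ) / 2 - (A.card : ℝ) - (S.card : ℝ)) := by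
        have hd2 : (0 : ℝ) ≤ (d : ℝ) / 2 := by linarith
        have hy0 : (0 : ℝ) ≤ (Y'.card : ℝ) := by positivity
        exact mul_le_mul hYbig hgap hd2 hy0
      have hNpos : 0 < N := by
        have hXc20 : (Xc.card : ℝ) * ((n : ℝ) / 20) ≤ (2 * (d : ℝ) + 2) * ((n : ℝ) / 20) := by
          have : (0 : ℝ) ≤ (n : ℝ) / 20 := by linarith
          exact mul_le_mul_of_nonneg_right hXcR this
        have hmain : (Y'.card : ℝ) * ((n : ℝ) / 2 - (A.card : ℝ) - (S.card : ℝ)) ≤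
            (2 * (d : ℝ) + 2) * ((n : ℝ) / 20) + (N : ℝ) := by nlinarith
        have hnd : (n : ℝ) ≤ (n : ℝ) * (d : ℝ) := by nlinarith
        have hNR : (0 : ℝ) < (N : ℝ) := by nlinarith
        exact_mod_cast hNR
      obtain ⟨e, he⟩ := Finset.card_pos.mp hNpos
      rw [Finset.mem_filter] at he
      obtain ⟨heG, he1, he2⟩ := he
      have he1v : e.1 ∉ Vm := (Finset.mem_sdiff.mp he1).2
      have he2v : e.2 ∉ Vm := (Finset.mem_sdiff.mp he2).2
      have heM : e ∉ M := fun hmem => he1v (hVmem e hmem).1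
      refine ⟨insert e M, ?_, ?_, ?_, ?_⟩
      · exact Finset.insert_subset heG hMG
      · rw [Finset.card_insert_of_notMem heM, hMcard]
      · intro f hf
        rcases Finset.mem_insert.mp hf with rfl | hf'
        · exact ⟨(Finset.mem_sdiff.mp he1).1, (Finset.mem_sdiff.mp he2).1⟩
        · exact hMin f hf'
      · intro f hf g hg hfg
        rcases Finset.mem_insert.mp hf with rfl | hf' <;>
          rcases Finset.mem_insert.mp hg with rfl | hg'
        · exact absurd rfl hfg
        · obtain ⟨hg1, hg2⟩ := hVmem g hg'
          exact ⟨fun h => he1v (h ▸ hg1), fun h => he1v (h ▸ hg2),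
            fun h => he2v (h ▸ hg1), fun h => he2v (h ▸ hg2)⟩
        · obtain ⟨hf1, hf2⟩ := hVmem f hf'
          exact ⟨fun h => he1v (h ▸ hf1), fun h => he2v (h ▸ hf1),
            fun h => he1v (h ▸ hf2), fun h => he2v (h ▸ hf2)⟩
        · exact hMdisj f hf' g hg' hfg
  exact key (d + 2) le_rfl
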